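/- arXiv:1704.00102 — 3 statements merged into one kernel-verified Lean document; each statement's English description precedes it below -/
import Mathlib

section
/- For symmetric positive definite n×n real matrices X and Y, tr((X^{1/2} Y X^{1/2})^{1/2}) ≤ √(tr(X) · tr(Y)). -/
open Matrix
open scoped MatrixOrder Matrix.Norms.L2Operator

lemma trace_cauchy_schwarz {n : ℕ} (A B : Matrix (Fin n) (Fin n) ℝ) :
    (A * B).trace ^ 2 ≤ (A * Aᵀ).trace * (B * Bᵀ).trace := by
  have h1 : (A * B).trace = ∑ p : Fin n × Fin n, A p.1 p.2 * B p.2 p.1 := by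
    rw [Matrix.trace, Fintype.sum_prod_type]
    simp [Matrix.diag, Matrix.mul_apply]
  have h2 : (A * Aᵀ).trace = ∑ p : Fin n × Fin n, (A p.1 p.2) ^ 2 := by
    rw [Matrix.trace, Fintype.sum_prod_type]
    simp [Matrix.diag, Matrix.mul_apply, sq]
  have h3 : (B * Bᵀ).trace = ∑ p : Fin n × Fin n, (B p.2 p.1) ^ 2 := by
    rw [Matrix.trace, Fintype.sum_prod_type_right]
    simp [Matrix.diag, Matrix.mul_apply, sq]
  rw [h1, h2, h3]
  exact Finset.sum_mul_sq_le_sq_mul_sq _ _ _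

lemma psd_trace_nonneg {n : ℕ} {S : Matrix (Fin n) (Fin n) ℝ} (hS : S.PosSemidef) :
    0 ≤ S.trace := by
  apply Finset.sum_nonneg
  intro i _
  exact hS.diag_nonneg

/-- For symmetric positive definite `X, Y`, `tr((X^{1/2} Y X^{1/2})^{1/2}) ≤ √(tr X · tr Y)`. -/
theorem stmt0 {n : ℕ} (X Y : Matrix (Fin n) (Fin n) ℝ)
    (hX : X.PosDef) (hY : Y.PosDef)
    (hXYX : (CFC.sqrt X * Y * CFC.sqrt X).PosSemidef) :
    (CFC.sqrt (CFC.sqrt X * Y * CFC.sqrt X)).trace ≤ Real.sqrt (X.trace * Y.trace) := by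
  set A := CFC.sqrt X with hAdef
  set S := CFC.sqrt (A * Y * A) with hSdef
  have hA2 : A * A = X := CFC.sqrt_mul_sqrt_self X hX.posSemidef.nonneg
  have hS2 : S * S = A * Y * A := CFC.sqrt_mul_sqrt_self _ hXYX.nonneg
  have hAsym : Aᵀ = A := by
    have := (Matrix.nonneg_iff_posSemidef.mp (CFC.sqrt_nonneg X)).1
    simpa [Matrix.IsHermitian] using this
  have hSsym : Sᵀ = S := by
    have := (Matrix.nonneg_iff_posSemidef.mp (CFC.sqrt_nonneg (A * Y * A))).1
    simpa [Matrix.IsHermitian] using this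
  have hAdet : IsUnit A.det := by
    have hdet : A.det * A.det = X.det := by rw [← Matrix.det_mul, hA2]
    have hXdet : X.det ≠ 0 := ne_of_gt hX.det_pos
    have : A.det ≠ 0 := fun h => hXdet (by rw [← hdet, h, mul_zero])
    exact this.isUnit
  have hAinv : A * A⁻¹ = 1 := Matrix.mul_nonsing_inv A hAdet
  have hAinv' : A⁻¹ * A = 1 := Matrix.nonsing_inv_mul A hAdet
  set B := A⁻¹ * S with hBdef
  have hAB : A * B = S := by rw [hBdef, ← mul_assoc, hAinv, one_mul]
  have hBt : Bᵀ = S * A⁻¹ := by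
    rw [hBdef, Matrix.transpose_mul, hSsym, Matrix.transpose_nonsing_inv, hAsym]
  have hBB : B * Bᵀ = Y := by
    rw [hBt, hBdef]
    calc A⁻¹ * S * (S * A⁻¹) = A⁻¹ * (S * S) * A⁻¹ := by simp only [mul_assoc]
    _ = A⁻¹ * (A * Y * A) * A⁻¹ := by rw [hS2]
    _ = (A⁻¹ * A) * Y * (A * A⁻¹) := by simp only [mul_assoc]
    _ = Y := by rw [hAinv, hAinv', one_mul, mul_one]
  have hAA : A * Aᵀ = X := by rw [hAsym, hA2]
  have hcs := trace_cauchy_schwarz A B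
  rw [hAB, hBB, hAA] at hcs
  have htr : 0 ≤ S.trace := psd_trace_nonneg (Matrix.nonneg_iff_posSemidef.mp (CFC.sqrt_nonneg (A * Y * A)))
  rw [Real.le_sqrt htr (le_trans (sq_nonneg _) hcs)]
  exact hcs
end

section
/- For symmetric positive definite matrices X, Y and any symmetric positive definite matrix G, tr((X^{1/2} Y X^{1/2})^{1/2}) ≤ √(tr(XG) · tr(YG^{-1})). -/
open Matrix

open scoped ComplexOrder in
/-- The positive semidefinite square root of a positive semidefinite matrix
(the definition `Matrix.PosSemidef.sqrt` of the older Mathlib, since removed). -/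
noncomputable def Matrix.PosSemidef.sqrt {n 𝕜 : Type*} [Fintype n] [RCLike 𝕜] [DecidableEq n]
    {A : Matrix n n 𝕜} (hA : A.PosSemidef) : Matrix n n 𝕜 :=
  hA.1.eigenvectorUnitary.1 * diagonal ((↑) ∘ (√·) ∘ hA.1.eigenvalues) *
  (star hA.1.eigenvectorUnitary : Matrix n n 𝕜)

open scoped ComplexOrder in
lemma Matrix.PosSemidef.sqrt_mul_self {n 𝕜 : Type*} [Fintype n] [RCLike 𝕜] [DecidableEq n]
    {A : Matrix n n 𝕜} (hA : A.PosSemidef) : hA.sqrt * hA.sqrt = A := by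
  have hU : (star hA.1.eigenvectorUnitary : Matrix n n 𝕜) * hA.1.eigenvectorUnitary.1 = 1 :=
    Unitary.coe_star_mul_self _
  conv_rhs => rw [hA.1.spectral_theorem, Unitary.conjStarAlgAut_apply]
  unfold Matrix.PosSemidef.sqrt
  calc _ = hA.1.eigenvectorUnitary.1 * (diagonal ((↑) ∘ (√·) ∘ hA.1.eigenvalues) *
        ((star hA.1.eigenvectorUnitary : Matrix n n 𝕜) * hA.1.eigenvectorUnitary.1) *
        diagonal ((↑) ∘ (√·) ∘ hA.1.eigenvalues)) * (star hA.1.eigenvectorUnitary : Matrix n n 𝕜) := by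
        simp only [Matrix.mul_assoc]
    _ = _ := by
      rw [hU, Matrix.mul_one, diagonal_mul_diagonal]
      congr 3
      funext i
      simp only [Function.comp_apply, ← RCLike.ofReal_mul, Real.mul_self_sqrt (hA.eigenvalues_nonneg i)]

open scoped ComplexOrder in
lemma Matrix.PosSemidef.posSemidef_sqrt {n 𝕜 : Type*} [Fintype n] [RCLike 𝕜] [DecidableEq n]
    {A : Matrix n n 𝕜} (hA : A.PosSemidef) : hA.sqrt.PosSemidef := by
  unfold Matrix.PosSemidef.sqrt
  have hD : (diagonal ((↑) ∘ (√·) ∘ hA.1.eigenvalues) : Matrix n n 𝕜).PosSemidef :=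
    posSemidef_diagonal_iff.mpr fun i => by
      simp only [Function.comp_apply]
      exact RCLike.ofReal_nonneg.mpr (Real.sqrt_nonneg _)
  have := hD.mul_mul_conjTranspose_same (hA.1.eigenvectorUnitary.1)
  rwa [← star_eq_conjTranspose] at this

/-- Uhlmann's variational inequality:
`tr((X^{1/2} Y X^{1/2})^{1/2}) ≤ √(tr(XG) · tr(YG⁻¹))` for SPD `X, Y, G`. -/
theorem stmt1 {n : ℕ} (X Y G : Matrix (Fin n) (Fin n) ℝ)
    (hX : X.PosDef) (hY : Y.PosDef) (hG : G.PosDef)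
    (hXYX : (hX.posSemidef.sqrt * Y * hX.posSemidef.sqrt).PosSemidef) :
    hXYX.sqrt.trace ≤ Real.sqrt ((X * G).trace * (Y * G⁻¹).trace) := by
  set A := hX.posSemidef.sqrt with hAdef
  set Z := hXYX.sqrt with hZdef
  set S := hY.posSemidef.sqrt with hSdef
  set H := hG.posSemidef.sqrt with hHdef
  have hAA : A * A = X := hX.posSemidef.sqrt_mul_self
  have hSS : S * S = Y := hY.posSemidef.sqrt_mul_self
  have hHH : H * H = G := hG.posSemidef.sqrt_mul_self
  have hZZ : Z * Z = A * Y * A := hXYX.sqrt_mul_self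
  have hAH : Aᴴ = A := hX.posSemidef.posSemidef_sqrt.isHermitian
  have hSH : Sᴴ = S := hY.posSemidef.posSemidef_sqrt.isHermitian
  have hHHm : Hᴴ = H := hG.posSemidef.posSemidef_sqrt.isHermitian
  have hZH : Zᴴ = Z := hXYX.posSemidef_sqrt.isHermitian
  -- determinants are nonzero
  have hdetA : A.det ≠ 0 := by
    have h1 : A.det * A.det = X.det := by rw [← det_mul, hAA]
    intro h
    rw [h, mul_zero] at h1
    exact (ne_of_gt hX.det_pos) h1.symm
  have hdetH : H.det ≠ 0 := by
    have h1 : H.det * H.det = G.det := by rw [← det_mul, hHH]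
    intro h
    rw [h, mul_zero] at h1
    exact (ne_of_gt hG.det_pos) h1.symm
  have hdetZ : Z.det ≠ 0 := by
    have h1 : Z.det * Z.det = A.det * Y.det * A.det := by
      rw [← det_mul, hZZ, det_mul, det_mul]
    intro h
    rw [h, mul_zero] at h1
    exact (mul_ne_zero (mul_ne_zero hdetA (ne_of_gt hY.det_pos)) hdetA) h1.symm
  have hZinv : Z * Z⁻¹ = 1 := mul_nonsing_inv _ (isUnit_iff_ne_zero.mpr hdetZ)
  have hZinv' : Z⁻¹ * Z = 1 := nonsing_inv_mul _ (isUnit_iff_ne_zero.mpr hdetZ)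
  have hHinv : H * H⁻¹ = 1 := mul_nonsing_inv _ (isUnit_iff_ne_zero.mpr hdetH)
  have hZinvH : Z⁻¹ᴴ = Z⁻¹ := by rw [conjTranspose_nonsing_inv, hZH]
  have hHinvH : H⁻¹ᴴ = H⁻¹ := by rw [conjTranspose_nonsing_inv, hHHm]
  set U := S * A * Z⁻¹ with hUdef
  have hUH : Uᴴ = Z⁻¹ * A * S := by
    rw [hUdef, conjTranspose_mul, conjTranspose_mul, hZinvH, hAH, hSH, Matrix.mul_assoc]
  -- U is unitary
  have hUtU : Uᴴ * U = 1 := by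
    rw [hUH, hUdef]
    calc Z⁻¹ * A * S * (S * A * Z⁻¹)
        = Z⁻¹ * (A * (S * S) * A) * Z⁻¹ := by noncomm_ring
      _ = Z⁻¹ * (Z * Z) * Z⁻¹ := by rw [hSS, ← hZZ]
      _ = (Z⁻¹ * Z) * (Z * Z⁻¹) := by noncomm_ring
      _ = 1 := by rw [hZinv', hZinv, one_mul]
  have hUUt : U * Uᴴ = 1 := mul_eq_one_comm.mp hUtU
  -- the two factors
  set B := H * A with hBdef
  set C := H⁻¹ * S * U with hCdef
  have hBt : Bᴴ = A * H := by rw [hBdef, conjTranspose_mul, hAH, hHHm]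
  have hCt : Cᴴ = Uᴴ * S * H⁻¹ := by
    rw [hUH, hCdef, hUdef]
    simp only [conjTranspose_mul, hSH, hAH, hZinvH, hHinvH]
    noncomm_ring
  -- trace identities
  have t1 : Bᴴ * C = Z := by
    rw [hBt, hCdef, hUdef]
    calc A * H * (H⁻¹ * S * (S * A * Z⁻¹))
        = A * (H * H⁻¹) * ((S * S) * A * Z⁻¹) := by noncomm_ring
      _ = A * (S * S) * A * Z⁻¹ := by rw [hHinv, Matrix.mul_one]; noncomm_ring
      _ = Z * Z * Z⁻¹ := by rw [hSS, ← hZZ]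
      _ = Z := by rw [Matrix.mul_assoc, hZinv, Matrix.mul_one]
  have t2 : (Bᴴ * B).trace = (X * G).trace := by
    rw [hBt, hBdef]
    have e : A * H * (H * A) = A * (G * A) := by rw [← hHH]; noncomm_ring
    rw [e, Matrix.trace_mul_comm, Matrix.mul_assoc, Matrix.trace_mul_comm, hAA,
      Matrix.trace_mul_comm]
  have t3 : (Cᴴ * C).trace = (Y * G⁻¹).trace := by
    rw [hCt, hCdef]
    have e : Uᴴ * S * H⁻¹ * (H⁻¹ * S * U) = Uᴴ * (S * (H⁻¹ * H⁻¹) * S * U) := by noncomm_ring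
    rw [e, Matrix.trace_mul_comm, Matrix.mul_assoc, hUUt, Matrix.mul_one]
    have eG : H⁻¹ * H⁻¹ = G⁻¹ := by rw [← hHH, Matrix.mul_inv_rev]
    rw [eG, Matrix.trace_mul_comm, ← Matrix.mul_assoc, Matrix.trace_mul_comm, hSS,
      Matrix.trace_mul_comm]
  -- trace as an entrywise sum
  have tr_form : ∀ P Q : Matrix (Fin n) (Fin n) ℝ,
      (Pᴴ * Q).trace = ∑ p : Fin n × Fin n, P p.2 p.1 * Q p.2 p.1 := by
    intro P Q
    rw [Fintype.sum_prod_type]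
    simp [Matrix.trace, Matrix.diag, Matrix.mul_apply]
  -- Cauchy–Schwarz
  have hCS : Z.trace ^ 2 ≤ (X * G).trace * (Y * G⁻¹).trace := by
    have h := Finset.sum_mul_sq_le_sq_mul_sq Finset.univ
      (fun p : Fin n × Fin n => B p.2 p.1) (fun p : Fin n × Fin n => C p.2 p.1)
    have e1 : Z.trace = ∑ p : Fin n × Fin n, B p.2 p.1 * C p.2 p.1 := by
      rw [← tr_form, t1]
    have e2 : (X * G).trace = ∑ p : Fin n × Fin n, B p.2 p.1 ^ 2 := by
      rw [← t2, tr_form]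
      simp [sq]
    have e3 : (Y * G⁻¹).trace = ∑ p : Fin n × Fin n, C p.2 p.1 ^ 2 := by
      rw [← t3, tr_form]
      simp [sq]
    rw [e1, e2, e3]
    exact h
  -- nonnegativity of the trace
  have hZtr : 0 ≤ Z.trace := by
    rw [Matrix.trace]
    refine Finset.sum_nonneg fun i _ => ?_
    have := hXYX.posSemidef_sqrt.dotProduct_mulVec_nonneg (Pi.single i 1)
    simpa using this
  have hprod : 0 ≤ (X * G).trace * (Y * G⁻¹).trace := le_trans (sq_nonneg _) hCS
  exact (Real.le_sqrt hZtr hprod).mpr hCS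
end

section
/- For symmetric positive definite matrices P and P₀, the matrix derivative ∂/∂P tr((P₀^{1/2} P P₀^{1/2})^{1/2}) equals (1/2) P₀^{1/2}(P₀^{−1/2} P⁻¹ P₀^{−1/2})^{1/2} P₀^{1/2}. -/
set_option maxHeartbeats 1000000
open Filter Topology


open Matrix Classical

/-- Total version of the positive semidefinite matrix square root. -/
noncomputable def msqrt {n : ℕ} (A : Matrix (Fin n) (Fin n) ℝ) : Matrix (Fin n) (Fin n) ℝ :=
  if h : A.PosSemidef then
    (h.1.eigenvectorUnitary : Matrix (Fin n) (Fin n) ℝ) *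
      diagonal ((↑) ∘ (fun i => Real.sqrt (h.1.eigenvalues i))) *
      (star h.1.eigenvectorUnitary : Matrix (Fin n) (Fin n) ℝ)
  else 0

open scoped MatrixOrder

lemma posDef_sqrt {n : ℕ} {A : Matrix (Fin n) (Fin n) ℝ} (hA : A.PosDef) :
    (CFC.sqrt A).PosDef := by
  have hS : (CFC.sqrt A).PosSemidef := (CFC.sqrt_nonneg A).posSemidef
  refine PosDef.of_dotProduct_mulVec_pos hS.1 fun x hx => ?_
  rcases lt_or_eq_of_le (hS.dotProduct_mulVec_nonneg x) with h | h
  · exact h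
  · exfalso
    have h0 : CFC.sqrt A *ᵥ x = 0 := (hS.dotProduct_mulVec_zero_iff x).mp h.symm
    have : A *ᵥ x = 0 := by
      rw [← CFC.sqrt_mul_sqrt_self A hA.posSemidef.nonneg, ← mulVec_mulVec, h0, mulVec_zero]
    have h2 := hA.dotProduct_mulVec_pos hx
    rw [this, dotProduct_zero] at h2
    exact lt_irrefl 0 h2

-- congruence preserves PD (real case, invertible congruence matrix)
lemma posDef_conj {n : ℕ} {A B : Matrix (Fin n) (Fin n) ℝ} (hA : A.PosDef)
    (hB : IsUnit B.det) : (Bᴴ * A * B).PosDef := by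
  refine PosDef.of_dotProduct_mulVec_pos (isHermitian_conjTranspose_mul_mul B hA.1) fun x hx => ?_
  have hBx : B *ᵥ x ≠ 0 := by
    have hinj := (Matrix.mulVec_injective_iff_isUnit (K := ℝ)).mpr (isUnit_iff_isUnit_det B |>.mpr hB)
    intro h
    exact hx (hinj (by simpa using h))
  simpa only [star_mulVec, dotProduct_mulVec, vecMul_vecMul] using hA.dotProduct_mulVec_pos hBx

-- Sylvester: kernel of X ↦ S*X + X*S is trivial when S is PD
lemma sylvester_ker {n : ℕ} {S : Matrix (Fin n) (Fin n) ℝ} (hS : S.PosDef)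
    {X : Matrix (Fin n) (Fin n) ℝ} (hX : S * X + X * S = 0) : X = 0 := by
  classical
  have hH := hS.1
  set U : Matrix (Fin n) (Fin n) ℝ := (hH.eigenvectorUnitary : Matrix (Fin n) (Fin n) ℝ) with hU
  have hUU : star U * U = 1 := Matrix.mem_unitaryGroup_iff'.mp hH.eigenvectorUnitary.2
  have hUU' : U * star U = 1 := Matrix.mem_unitaryGroup_iff.mp hH.eigenvectorUnitary.2
  have hspec : star U * S * U = diagonal (RCLike.ofReal ∘ hH.eigenvalues) :=
    by simpa [Unitary.conjStarAlgAut_apply] using hH.conjStarAlgAut_star_eigenvectorUnitary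
  set K : Matrix (Fin n) (Fin n) ℝ := star U * X * U with hK
  have key : diagonal (RCLike.ofReal ∘ hH.eigenvalues) * K
      + K * diagonal (RCLike.ofReal ∘ hH.eigenvalues) = 0 := by
    rw [← hspec]
    have e1 : star U * S * U * K = star U * (S * (X * U)) := by
      simp only [hK, Matrix.mul_assoc]
      rw [show U * (star U * (X * U)) = X * U by rw [← Matrix.mul_assoc, hUU', Matrix.one_mul]]
    have e2 : K * (star U * S * U) = star U * (X * (S * U)) := by
      simp only [hK, Matrix.mul_assoc]
      rw [show U * (star U * (S * U)) = S * U by rw [← Matrix.mul_assoc, hUU', Matrix.one_mul]]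
    rw [e1, e2]
    have := congrArg (fun M => star U * (M * U)) hX
    simpa [Matrix.add_mul, Matrix.mul_add, Matrix.mul_assoc] using this
  have hKzero : K = 0 := by
    ext i j
    have h := congrFun (congrFun key i) j
    simp only [Matrix.add_apply, Matrix.diagonal_mul, Matrix.mul_diagonal,
      Matrix.zero_apply, Function.comp, RCLike.ofReal_real_eq_id, id] at h
    have hpos : (0:ℝ) < hH.eigenvalues i + hH.eigenvalues j :=
      add_pos (hS.eigenvalues_pos i) (hS.eigenvalues_pos j)
    have : (hH.eigenvalues i + hH.eigenvalues j) * K i j = 0 := by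
      rw [add_mul]; linarith [h]
    simpa using (mul_eq_zero.mp this).resolve_left hpos.ne'
  have : X = U * K * star U := by
    rw [hK]
    simp only [Matrix.mul_assoc, hUU']
    rw [← Matrix.mul_assoc, hUU', Matrix.one_mul]
    simp [Matrix.mul_assoc, hUU']
  rw [this, hKzero, Matrix.mul_zero, Matrix.zero_mul]

section
variable {n : ℕ}
attribute [local instance] Matrix.linftyOpNormedRing Matrix.linftyOpNormedAlgebra

abbrev MM (n : ℕ) := Matrix (Fin n) (Fin n) ℝ

lemma tendsto_entry {ψ : ℝ → MM n} {L : Filter ℝ} {S : MM n} (h : Tendsto ψ L (𝓝 S)) (i j : Fin n) :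
    Tendsto (fun t => ψ t i j) L (𝓝 (S i j)) := by
  have : Continuous fun A : MM n => A i j := by
    let f : MM n →ₗ[ℝ] ℝ :=
      { toFun := fun A => A i j, map_add' := fun _ _ => rfl, map_smul' := fun _ _ => rfl }
    exact f.continuous_of_finiteDimensional
  exact (this.tendsto S).comp h

lemma eventually_posDef {S₀ : MM n} (hS₀ : S₀.PosDef) {ψ : ℝ → MM n}
    (hcont : Tendsto ψ (𝓝 (0:ℝ)) (𝓝 S₀)) (hsymm : ∀ᶠ t in 𝓝 (0:ℝ), (ψ t).IsHermitian) :
    ∀ᶠ t in 𝓝 (0:ℝ), (ψ t).PosDef := by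
  classical
  set R : MM n := CFC.sqrt S₀ with hR
  have hRpd : R.PosDef := posDef_sqrt hS₀
  have hRinv : R⁻¹.PosDef := hRpd.inv
  have hRR : R * R = S₀ := CFC.sqrt_mul_sqrt_self S₀ hS₀.posSemidef.nonneg
  have hRinvR : R⁻¹ * R = 1 := Matrix.nonsing_inv_mul R hRpd.det_pos.ne'.isUnit
  have hRRinv : R * R⁻¹ = 1 := Matrix.mul_nonsing_inv R hRpd.det_pos.ne'.isUnit
  have hcontG : Tendsto (fun t => R⁻¹ * ψ t * R⁻¹) (𝓝 (0:ℝ)) (𝓝 (1 : MM n)) := by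
    have hc : Continuous fun A : MM n => R⁻¹ * A * R⁻¹ := by
      let f : MM n →ₗ[ℝ] MM n :=
        { toFun := fun A => R⁻¹ * A * R⁻¹,
          map_add' := fun a b => by rw [Matrix.mul_add, Matrix.add_mul]
          map_smul' := fun c a => by rw [RingHom.id_apply, Matrix.mul_smul, Matrix.smul_mul] }
      exact f.continuous_of_finiteDimensional
    have h2 := (hc.tendsto S₀).comp hcont
    have hval : R⁻¹ * S₀ * R⁻¹ = 1 := by
      rw [← hRR, ← Matrix.mul_assoc, Matrix.mul_assoc (R⁻¹ * R), hRinvR, hRRinv]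
      simp
    rw [hval] at h2
    exact h2
  set ε : ℝ := 1 / (2 * (n + 1)) with hε
  have hεpos : 0 < ε := by positivity
  have hentry : ∀ᶠ t in 𝓝 (0:ℝ), ∀ i j, |(R⁻¹ * ψ t * R⁻¹) i j - (1 : MM n) i j| ≤ ε := by
    rw [eventually_all]
    intro i
    rw [eventually_all]
    intro j
    have h1 := ((tendsto_entry hcontG i j).sub_const ((1:MM n) i j)).abs
    rw [sub_self, abs_zero] at h1
    exact (h1.eventually_lt_const hεpos).mono fun t ht => ht.le
  filter_upwards [hentry, hsymm] with t hent hsy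
  set G := R⁻¹ * ψ t * R⁻¹ with hG
  have hGsymm : G.IsHermitian := by
    have h5 := Matrix.isHermitian_conjTranspose_mul_mul (R⁻¹) hsy
    rw [hRinv.1.eq] at h5
    exact h5
  have hGpd : G.PosDef := by
    refine PosDef.of_dotProduct_mulVec_pos hGsymm fun x hx => ?_
    have key : star x ⬝ᵥ G *ᵥ x = ∑ i, ∑ j, x i * G i j * x j := by
      simp [dotProduct, Matrix.mulVec, dotProduct, Finset.mul_sum, mul_assoc]
    set T : ℝ := ∑ i, ∑ j, x i * (G i j - (1:MM n) i j) * x j with hT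
    have split : (∑ i, ∑ j, x i * G i j * x j) = T + ∑ i, x i * x i := by
      rw [hT]
      have sum1 : ∑ i, ∑ j, x i * (1:MM n) i j * x j = ∑ i, x i * x i := by
        refine Finset.sum_congr rfl fun i _ => ?_
        rw [Finset.sum_eq_single i]
        · simp [Matrix.one_apply]
        · intro b _ hb; simp [Matrix.one_apply, Ne.symm hb]
        · simp
      rw [← sum1, ← Finset.sum_add_distrib]
      refine Finset.sum_congr rfl fun i _ => ?_
      rw [← Finset.sum_add_distrib]
      refine Finset.sum_congr rfl fun j _ => ?_
      ring
    have habs : |T| ≤ ε * (∑ i, |x i|) ^ 2 := by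
      calc |T| ≤ ∑ i, |∑ j, x i * (G i j - (1:MM n) i j) * x j| := Finset.abs_sum_le_sum_abs _ _
        _ ≤ ∑ i, ∑ j, |x i * (G i j - (1:MM n) i j) * x j| :=
            Finset.sum_le_sum fun i _ => Finset.abs_sum_le_sum_abs _ _
        _ ≤ ∑ i, ∑ j, |x i| * ε * |x j| := by
            refine Finset.sum_le_sum fun i _ => Finset.sum_le_sum fun j _ => ?_
            rw [abs_mul, abs_mul]
            exact mul_le_mul_of_nonneg_right
              (mul_le_mul_of_nonneg_left (hent i j) (abs_nonneg _)) (abs_nonneg _)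
        _ = ε * (∑ i, |x i|) ^ 2 := by
            rw [sq, Finset.sum_mul_sum, Finset.mul_sum]
            refine Finset.sum_congr rfl fun i _ => ?_
            rw [Finset.mul_sum]
            refine Finset.sum_congr rfl fun j _ => ?_
            ring
    have hcs : (∑ i, |x i|) ^ 2 ≤ (n : ℝ) * ∑ i, x i * x i := by
      have h2 := sq_sum_le_card_mul_sum_sq (s := (Finset.univ : Finset (Fin n)))
        (f := fun i => |x i|)
      have h3 : ∑ i, |x i| ^ 2 = ∑ i, x i * x i := by
        refine Finset.sum_congr rfl fun i _ => ?_
        rw [sq_abs, sq]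
      rw [h3] at h2
      simpa [Finset.card_univ] using h2
    have habs2 : |T| ≤ ε * ((n:ℝ) * ∑ i, x i * x i) :=
      habs.trans (mul_le_mul_of_nonneg_left hcs hεpos.le)
    have hxx : 0 < ∑ i, x i * x i := by
      obtain ⟨i, hi⟩ := Function.ne_iff.mp hx
      exact Finset.sum_pos' (fun j _ => mul_self_nonneg _)
        ⟨i, Finset.mem_univ i, mul_self_pos.mpr hi⟩
    have hεn : ε * (n:ℝ) < 1 := by
      rw [hε, div_mul_eq_mul_div, one_mul, div_lt_one (by positivity)]
      linarith
    rw [key, split]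
    have := neg_abs_le T
    nlinarith
  -- ψ t = R * G * R
  have : ψ t = Rᴴ * G * R := by
    rw [hG, hRpd.1.eq]
    rw [Matrix.mul_assoc, Matrix.mul_assoc, hRinvR, Matrix.mul_one, ← Matrix.mul_assoc, hRRinv,
      Matrix.one_mul]
  rw [this]
  exact posDef_conj hGpd hRpd.det_pos.ne'.isUnit
end

section
variable {n : ℕ}
attribute [local instance] Matrix.linftyOpNormedRing Matrix.linftyOpNormedAlgebra

lemma msqrt_of_psd {n : ℕ} {A : Matrix (Fin n) (Fin n) ℝ} (h : A.PosSemidef) :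
    msqrt A = CFC.sqrt A := by
  rw [msqrt, dif_pos h, CFC.sqrt_eq_cfc, cfc_nnreal_eq_real _ A, h.1.cfc_eq, IsHermitian.cfc,
    Unitary.conjStarAlgAut_apply]
  congr 2
  congr 1
  funext i
  simp only [Function.comp_apply, RCLike.ofReal_real_eq_id, id, Real.coe_sqrt,
    Real.coe_toNNReal _ (h.eigenvalues_nonneg i)]

theorem stmt12' (P P₀ : MM n) (hP : P.PosDef) (hP₀ : P₀.PosDef) :
    ∀ H : Matrix (Fin n) (Fin n) ℝ, H.IsSymm →
      HasDerivAt (fun t : ℝ => (msqrt (msqrt P₀ * (P + t • H) * msqrt P₀)).trace)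
        ((((1 / 2 : ℝ) •
            (msqrt P₀ * msqrt ((msqrt P₀)⁻¹ * P⁻¹ * (msqrt P₀)⁻¹) * msqrt P₀)) * H).trace)
        0 := by
  intro H hH
  have hHherm : H.IsHermitian := by
    rw [Matrix.IsHermitian, Matrix.conjTranspose_eq_transpose_of_trivial]; exact hH
  set Q : MM n := msqrt P₀ with hQdef
  have hQeq : Q = CFC.sqrt P₀ := msqrt_of_psd hP₀.posSemidef
  have hQpd : Q.PosDef := hQeq ▸ posDef_sqrt hP₀
  have hQherm : Q.IsHermitian := hQpd.1
  set M₀ : MM n := Q * P * Q with hM₀def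
  have hM₀pd : M₀.PosDef := by
    have := posDef_conj hP hQpd.det_pos.ne'.isUnit
    rwa [hQherm.eq] at this
  set S₀ : MM n := CFC.sqrt M₀ with hS₀def
  have hS₀pd : S₀.PosDef := posDef_sqrt hM₀pd
  have hS₀herm : S₀.IsHermitian := hS₀pd.1
  have hS₀sq : S₀ * S₀ = M₀ := CFC.sqrt_mul_sqrt_self M₀ hM₀pd.posSemidef.nonneg
  set K : MM n := Q * H * Q with hKdef
  have hKherm : K.IsHermitian := by
    have := Matrix.isHermitian_conjTranspose_mul_mul Q hHherm
    rwa [hQherm.eq] at this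
  -- the path
  set m : ℝ → MM n := fun t => M₀ + t • K with hmdef
  have hmznorm : m 0 = M₀ := by simp [hmdef]
  have hmeq : ∀ t : ℝ, msqrt P₀ * (P + t • H) * msqrt P₀ = m t := by
    intro t
    rw [hmdef]
    simp only [← hQdef, Matrix.mul_add, Matrix.add_mul, hM₀def, hKdef,
      Matrix.mul_smul, Matrix.smul_mul]
  have hS₀det : IsUnit S₀.det := hS₀pd.det_pos.ne'.isUnit
  -- the Sylvester operator as a linear equivalence
  let l : MM n →ₗ[ℝ] MM n :=
    { toFun := fun X => S₀ * X + X * S₀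
      map_add' := fun a b => by
        rw [Matrix.mul_add, Matrix.add_mul]
        abel
      map_smul' := fun c a => by
        rw [RingHom.id_apply, Matrix.mul_smul, Matrix.smul_mul, smul_add] }
  have hinj : Function.Injective l := by
    refine (injective_iff_map_eq_zero l).mpr fun X hX => ?_
    exact sylvester_ker hS₀pd hX
  have hbij : Function.Bijective l := ⟨hinj, (LinearMap.injective_iff_surjective).mp hinj⟩
  let e : MM n ≃ₗ[ℝ] MM n := LinearEquiv.ofBijective l hbij
  let E : MM n ≃L[ℝ] MM n := e.toContinuousLinearEquiv
  have hEapp : ∀ X, E X = S₀ * X + X * S₀ := fun X => rfl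
  -- squaring has strict derivative E at S₀
  have hg : HasStrictFDerivAt (fun S : MM n => S * S) (E : MM n →L[ℝ] MM n) S₀ := by
    have h1 := (hasStrictFDerivAt_id (𝕜 := ℝ) S₀).mul' (hasStrictFDerivAt_id S₀)
    have heq : (E : MM n →L[ℝ] MM n)
        = S₀ • ContinuousLinearMap.id ℝ (MM n) + (ContinuousLinearMap.id ℝ (MM n)).smulRight S₀ := by
      refine ContinuousLinearMap.ext fun X => ?_
      rw [show (E : MM n →L[ℝ] MM n) X = S₀ * X + X * S₀ from hEapp X]
      simp only [ContinuousLinearMap.add_apply, ContinuousLinearMap.smul_apply,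
        ContinuousLinearMap.smulRight_apply, ContinuousLinearMap.coe_id', id_eq, smul_eq_mul]
    rw [heq]
    exact h1
  have hgS₀ : (fun S : MM n => S * S) S₀ = M₀ := hS₀sq
  set φ : MM n → MM n := hg.localInverse _ _ _ with hφdef
  have hφ : HasStrictFDerivAt φ (E.symm : MM n →L[ℝ] MM n) M₀ := by
    have h2 := hg.to_localInverse
    rwa [hS₀sq] at h2
  have hmd : HasDerivAt m K 0 := by
    have h3 : HasDerivAt (fun t : ℝ => t • K) ((1:ℝ) • K) 0 := (hasDerivAt_id (0:ℝ)).smul_const K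
    rw [one_smul] at h3
    exact h3.const_add M₀
  have hd1 : HasDerivAt (fun t => φ (m t)) (E.symm K) 0 := by
    have h4 : HasFDerivAt φ (E.symm : MM n →L[ℝ] MM n) (m 0) := by
      rw [hmznorm]; exact hφ.hasFDerivAt
    exact h4.comp_hasDerivAt 0 hmd
  let trL : MM n →L[ℝ] ℝ := LinearMap.toContinuousLinearMap (Matrix.traceLinearMap (Fin n) ℝ ℝ)
  have hd2 : HasDerivAt (fun t => (φ (m t)).trace) ((E.symm K).trace) 0 := by
    have h5 : HasFDerivAt trL (trL : MM n →L[ℝ] ℝ) (φ (m 0)) := trL.hasFDerivAt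
    have h6 := h5.comp_hasDerivAt 0 hd1
    exact h6
  -- eventual equality with msqrt ∘ m
  have hmcont : Continuous m := by
    rw [hmdef]
    exact continuous_const.add (continuous_id.smul continuous_const)
  have hmc : Tendsto m (𝓝 (0:ℝ)) (𝓝 M₀) := by
    have := hmcont.tendsto 0
    rwa [hmznorm] at this
  have hrt : ∀ᶠ t in 𝓝 (0:ℝ), (φ (m t)) * (φ (m t)) = m t := by
    have h7 := hg.eventually_right_inverse
    rw [hS₀sq] at h7
    exact hmc.eventually h7
  have hφc : Tendsto (fun t => φ (m t)) (𝓝 (0:ℝ)) (𝓝 S₀) := by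
    have h8 := hg.localInverse_continuousAt
    rw [hS₀sq] at h8
    have h9 : φ M₀ = S₀ := by
      have := hg.localInverse_apply_image
      rwa [hS₀sq] at this
    have h10 := h8.tendsto.comp hmc
    rw [show HasStrictFDerivAt.localInverse (fun S : MM n => S * S) E S₀ hg M₀ = S₀ from h9] at h10
    exact h10
  have hsymm_m : ∀ t : ℝ, (m t).IsHermitian := by
    intro t
    rw [hmdef]
    refine hM₀pd.1.add ?_
    show (t • K)ᴴ = t • K
    rw [Matrix.conjTranspose_smul, star_trivial, hKherm.eq]
  let ctL : MM n →ₗ[ℝ] MM n :=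
    { toFun := fun X => Xᴴ
      map_add' := fun a b => Matrix.conjTranspose_add a b
      map_smul' := fun c a => by
        rw [RingHom.id_apply, Matrix.conjTranspose_smul, star_trivial] }
  have hctc : Continuous fun X : MM n => Xᴴ := ctL.continuous_of_finiteDimensional
  have hTc : Tendsto (fun t => (φ (m t))ᴴ) (𝓝 (0:ℝ)) (𝓝 S₀) := by
    have h11 := (hctc.tendsto S₀).comp hφc
    rwa [hS₀herm.eq] at h11
  have hherm_ev : ∀ᶠ t in 𝓝 (0:ℝ), (φ (m t)).IsHermitian := by
    filter_upwards [hTc.eventually hg.eventually_left_inverse, hrt] with t h1 h2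
    have h3 : (φ (m t))ᴴ * (φ (m t))ᴴ = m t := by
      rw [← Matrix.conjTranspose_mul, h2, (hsymm_m t).eq]
    rw [h3] at h1
    exact h1.symm
  have hpd_ev : ∀ᶠ t in 𝓝 (0:ℝ), (φ (m t)).PosDef := eventually_posDef hS₀pd hφc hherm_ev
  have hmpd_ev : ∀ᶠ t in 𝓝 (0:ℝ), (m t).PosDef :=
    eventually_posDef hM₀pd hmc (Filter.Eventually.of_forall hsymm_m)
  have heq_ev : (fun t : ℝ => (msqrt (msqrt P₀ * (P + t • H) * msqrt P₀)).trace)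
      =ᶠ[𝓝 (0:ℝ)] fun t => (φ (m t)).trace := by
    filter_upwards [hpd_ev, hmpd_ev, hrt] with t h1 h2 h3
    rw [hmeq t, msqrt_of_psd h2.posSemidef]
    congr 1
    exact CFC.sqrt_unique h3 h1.posSemidef.nonneg
  have hfinal0 : HasDerivAt (fun t : ℝ => (msqrt (msqrt P₀ * (P + t • H) * msqrt P₀)).trace)
      ((E.symm K).trace) 0 := hd2.congr_of_eventuallyEq heq_ev
  -- compute the derivative value
  set X : MM n := E.symm K with hXdef
  have hXK : S₀ * X + X * S₀ = K := by
    have h12 := E.apply_symm_apply K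
    rwa [hEapp] at h12
  have htr : X.trace = (1/2 : ℝ) * (S₀⁻¹ * K).trace := by
    have h13 : S₀⁻¹ * K = S₀⁻¹ * (S₀ * X) + S₀⁻¹ * (X * S₀) := by
      rw [← Matrix.mul_add, hXK]
    have h14 : (S₀⁻¹ * (S₀ * X)).trace = X.trace := by
      rw [← Matrix.mul_assoc, Matrix.nonsing_inv_mul _ hS₀det, Matrix.one_mul]
    have h15 : (S₀⁻¹ * (X * S₀)).trace = X.trace := by
      rw [← Matrix.mul_assoc, Matrix.trace_mul_cycle, Matrix.mul_nonsing_inv _ hS₀det,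
        Matrix.one_mul]
    rw [h13, Matrix.trace_add, h14, h15]
    ring
  have hQPQinv : Q⁻¹ * P⁻¹ * Q⁻¹ = M₀⁻¹ := by
    rw [hM₀def, Matrix.mul_inv_rev, Matrix.mul_inv_rev, Matrix.mul_assoc]
  have hS₀inv_sq : S₀⁻¹ ^ 2 = M₀⁻¹ := by
    rw [pow_two, ← Matrix.mul_inv_rev, hS₀sq]
  have hmsqrtinv : msqrt (Q⁻¹ * P⁻¹ * Q⁻¹) = S₀⁻¹ := by
    have hpsd : (Q⁻¹ * P⁻¹ * Q⁻¹).PosSemidef := by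
      rw [hQPQinv]; exact hM₀pd.inv.posSemidef
    rw [msqrt_of_psd hpsd]
    exact CFC.sqrt_unique (by rw [← pow_two, hS₀inv_sq, ← hQPQinv]) hS₀pd.inv.posSemidef.nonneg
  have hval : ((((1 / 2 : ℝ) • (Q * msqrt (Q⁻¹ * P⁻¹ * Q⁻¹) * Q)) * H)).trace = X.trace := by
    rw [hmsqrtinv, Matrix.smul_mul, Matrix.trace_smul, htr]
    have h16 : ((Q * S₀⁻¹ * Q) * H).trace = (S₀⁻¹ * K).trace := by
      rw [hKdef]
      rw [Matrix.mul_assoc (Q * S₀⁻¹) Q H, Matrix.trace_mul_comm]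
      rw [Matrix.trace_mul_comm (S₀⁻¹) (Q * H * Q), Matrix.mul_assoc (Q * H) Q (S₀⁻¹)]
    rw [h16]
    simp [smul_eq_mul]
  rw [← hQdef] at *
  rw [show (((1 / 2 : ℝ) • (Q * msqrt (Q⁻¹ * P⁻¹ * Q⁻¹) * Q)) * H).trace = X.trace from hval]
  exact hfinal0

end


/-- The gradient of `P ↦ tr((P₀^{1/2} P P₀^{1/2})^{1/2})` on SPD matrices is
`(1/2) P₀^{1/2}(P₀^{−1/2} P⁻¹ P₀^{−1/2})^{1/2} P₀^{1/2}`: the Fréchet (directional)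
derivative at `P` in any symmetric direction `H` equals `tr(D H)` for this `D`. -/
theorem stmt12 {n : ℕ} (P P₀ : Matrix (Fin n) (Fin n) ℝ)
    (hP : P.PosDef) (hP₀ : P₀.PosDef) :
    ∀ H : Matrix (Fin n) (Fin n) ℝ, H.IsSymm →
      HasDerivAt (fun t : ℝ => (msqrt (msqrt P₀ * (P + t • H) * msqrt P₀)).trace)
        ((((1 / 2 : ℝ) •
            (msqrt P₀ * msqrt ((msqrt P₀)⁻¹ * P⁻¹ * (msqrt P₀)⁻¹) * msqrt P₀)) * H).trace)
        0 := stmt12' P P₀ hP hP₀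
end
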